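/- Let X be a real linear n-normed space. The b-natural embedding J sending (x, b₂, ..., bₙ) to the evaluation functional φ_{(x,F)} ∈ X**_F (where φ_{(x,F)}(T) = T(x,b₂,...,bₙ)) is linear in x and norm-preserving: ‖J(x, b₂, ..., bₙ)‖ = ‖x, b₂, ..., bₙ‖ for all x ∈ X. Moreover, if x ≠ y and {x - y, b₂, ..., bₙ} is linearly independent, then J(x, b₂, ..., bₙ) ≠ J(y, b₂, ..., bₙ). -/

import Mathlib

open Function Filter Topology

/-- An `n`-norm on a real vector space `X` (axioms N1-N4). -/
structure NNorm (n : ℕ) (X : Type*) [AddCommGroup X] [Module ℝ X] where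
  toFun : (Fin n → X) → ℝ
  eq_zero_iff : ∀ v : Fin n → X, toFun v = 0 ↔ ¬ LinearIndependent ℝ v
  perm_invariant : ∀ (σ : Equiv.Perm (Fin n)) (v : Fin n → X), toFun (v ∘ σ) = toFun v
  smul_eq : ∀ (α : ℝ) (v : Fin n → X) (i : Fin n),
      toFun (Function.update v i (α • v i)) = |α| * toFun v
  add_le : ∀ (v : Fin n → X) (i : Fin n) (x y : X),
      toFun (Function.update v i (x + y)) ≤
        toFun (Function.update v i x) + toFun (Function.update v i y)

variable {n : ℕ} {X : Type*} [AddCommGroup X] [Module ℝ X]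

/-- The seminorm `x ↦ ‖x, b₂, …, bₙ‖` obtained by fixing the vectors `b` in all slots
but the first. -/
noncomputable def bsem (N : NNorm (n + 1) X) (b : Fin (n + 1) → X) (x : X) : ℝ :=
  N.toFun (Function.update b 0 x)

section Generic

variable {V : Type*} [AddCommGroup V] [Module ℝ V]

/-- A `b`-linear functional: additive and homogeneous in its first argument. -/
def IsBLinear (T : V → ℝ) : Prop :=
  (∀ x y : V, T (x + y) = T x + T y) ∧ ∀ (k : ℝ) (x : V), T (k • x) = k * T x

/-- A bounded `b`-linear functional with respect to a seminorm `p`. -/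
def IsBddBLinearP (p : V → ℝ) (T : V → ℝ) : Prop :=
  IsBLinear T ∧ ∃ M > 0, ∀ x : V, |T x| ≤ M * p x

/-- The norm of a bounded `b`-linear functional with respect to a seminorm `p`. -/
noncomputable def bnormP (p : V → ℝ) (T : V → ℝ) : ℝ :=
  sInf {M : ℝ | 0 < M ∧ ∀ x : V, |T x| ≤ M * p x}

end Generic

/-- A bounded `b`-linear functional on `X × ⟨b₂⟩ × ⋯ × ⟨bₙ⟩`. -/
def IsBddBLinear (N : NNorm (n + 1) X) (b : Fin (n + 1) → X) (T : X → ℝ) : Prop :=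
  IsBddBLinearP (bsem N b) T

/-- The norm of a bounded `b`-linear functional on `X × ⟨b₂⟩ × ⋯ × ⟨bₙ⟩`. -/
noncomputable def bnorm (N : NNorm (n + 1) X) (b : Fin (n + 1) → X) (T : X → ℝ) : ℝ :=
  bnormP (bsem N b) T

/-- Convergence of a sequence in a linear `n`-normed space. -/
def NConv (N : NNorm (n + 1) X) (u : ℕ → X) (x : X) : Prop :=
  ∀ v : Fin (n + 1) → X,
    Tendsto (fun k => N.toFun (Function.update v 0 (u k - x))) atTop (nhds 0)

/-- A subspace is closed if it contains all limits of its convergent sequences. -/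
def IsClosedSub (N : NNorm (n + 1) X) (W : Submodule ℝ X) : Prop :=
  ∀ u : ℕ → X, (∀ k, u k ∈ W) → ∀ x : X, NConv N u x → x ∈ W

/-- `b`-weak convergence of a sequence. -/
def BWeakConv (N : NNorm (n + 1) X) (b : Fin (n + 1) → X) (u : ℕ → X) (x : X) : Prop :=
  ∀ T : X → ℝ, IsBddBLinear N b T →
    Tendsto (fun k => T (u k)) atTop (nhds (T x))


section AuxLemmas

variable {n : ℕ} {X : Type*} [AddCommGroup X] [Module ℝ X]
variable (N : NNorm (n + 1) X) (b : Fin (n + 1) → X)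

lemma bsem_smul' (c : ℝ) (x : X) : bsem N b (c • x) = |c| * bsem N b x := by
  have h := N.smul_eq c (Function.update b 0 x) 0
  simpa [bsem, Function.update_idem] using h

lemma bsem_zero' : bsem N b 0 = 0 := by
  rw [bsem, N.eq_zero_iff]
  intro h
  exact h.ne_zero 0 (by simp)

lemma bsem_add_le' (x y : X) : bsem N b (x + y) ≤ bsem N b x + bsem N b y :=
  N.add_le b 0 x y

lemma bsem_neg' (x : X) : bsem N b (-x) = bsem N b x := by
  have := bsem_smul' N b (-1) x
  simpa using this

lemma bsem_nonneg' (x : X) : 0 ≤ bsem N b x := by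
  have h := bsem_add_le' N b x (-x)
  rw [add_neg_cancel, bsem_zero', bsem_neg'] at h
  linarith

lemma abs_le_bnorm_mul (T : X → ℝ) (hT : IsBddBLinear N b T) (x : X) :
    |T x| ≤ bnorm N b T * bsem N b x := by
  set S := {M : ℝ | 0 < M ∧ ∀ z : X, |T z| ≤ M * bsem N b z} with hS
  obtain ⟨M, hM⟩ := hT.2
  have hne : S.Nonempty := ⟨M, hM⟩
  rcases eq_or_lt_of_le (bsem_nonneg' N b x) with hp | hp
  · have h1 : |T x| ≤ M * bsem N b x := hM.2 x
    rw [← hp] at h1 ⊢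
    simpa using h1
  · rw [bnorm, bnormP, ← hS]
    refine le_of_forall_pos_le_add fun δ hδ => ?_
    obtain ⟨a, haS, ha⟩ := Real.lt_sInf_add_pos hne (div_pos hδ hp)
    calc |T x| ≤ a * bsem N b x := haS.2 x
      _ ≤ (sInf S + δ / bsem N b x) * bsem N b x := by
          apply mul_le_mul_of_nonneg_right (le_of_lt ha) (le_of_lt hp)
      _ = sInf S * bsem N b x + δ := by field_simp
      _ = _ := rfl

lemma exists_bdd_blinear (x : X) (hx : bsem N b x ≠ 0) :
    ∃ T : X → ℝ, IsBddBLinear N b T ∧ bnorm N b T ≤ 1 ∧ T x = bsem N b x := by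
  have hx0 : x ≠ 0 := fun h => hx (h ▸ bsem_zero' N b)
  set f : X →ₗ.[ℝ] ℝ := LinearPMap.mkSpanSingleton x (bsem N b x) hx0 with hf
  have hfle : ∀ z : f.domain, f z ≤ bsem N b z := by
    rintro ⟨z, hz⟩
    obtain ⟨c, rfl⟩ := Submodule.mem_span_singleton.1 hz
    have h1 : f ⟨c • x, hz⟩ = c * bsem N b x :=
      (LinearPMap.mkSpanSingleton'_apply x (bsem N b x) _ c hz).trans (smul_eq_mul ..)
    rw [h1]
    calc c * bsem N b x ≤ |c| * bsem N b x :=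
          mul_le_mul_of_nonneg_right (le_abs_self c) (bsem_nonneg' N b x)
      _ = bsem N b (c • x) := (bsem_smul' N b c x).symm
  obtain ⟨g, hgf, hgle⟩ := exists_extension_of_le_sublinear f (bsem N b)
    (fun c hc z => by rw [bsem_smul' N b c z, abs_of_pos hc])
    (bsem_add_le' N b) hfle
  have habs : ∀ z : X, |g z| ≤ bsem N b z := by
    intro z
    rw [abs_le]
    constructor
    · have := hgle (-z)
      rw [map_neg, bsem_neg'] at this
      linarith
    · exact hgle z
  refine ⟨g, ⟨⟨fun a c => map_add g a c, fun k a => by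
      rw [map_smul, smul_eq_mul]⟩, 1, one_pos, fun z => by simpa using habs z⟩, ?_, ?_⟩
  · apply csInf_le
    · exact ⟨0, fun M hM => le_of_lt hM.1⟩
    · exact ⟨one_pos, fun z => by simpa using habs z⟩
  · have h2 : f ⟨x, Submodule.mem_span_singleton_self x⟩ = bsem N b x :=
      LinearPMap.mkSpanSingleton_apply ℝ ℝ hx0 (bsem N b x)
    exact (hgf ⟨x, Submodule.mem_span_singleton_self x⟩).trans h2

end AuxLemmas

theorem stmt7 (N : NNorm (n + 1) X) (b : Fin (n + 1) → X)
    (hdim : ↑(n + 1) ≤ Module.rank ℝ X) :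
    (∀ (x y : X) (α β : ℝ) (T : X → ℝ), IsBddBLinear N b T →
      T (α • x + β • y) = α * T x + β * T y) ∧
    (∀ x : X,
      sSup {r : ℝ | ∃ T : X → ℝ, IsBddBLinear N b T ∧ bnorm N b T ≤ 1 ∧ r = |T x|} =
        bsem N b x) ∧
    (∀ x y : X, x ≠ y → LinearIndependent ℝ (Function.update b 0 (x - y)) →
      (fun T : {T : X → ℝ // IsBddBLinear N b T} => T.1 x) ≠
        (fun T : {T : X → ℝ // IsBddBLinear N b T} => T.1 y)) := by
  
  refine ⟨?_, ?_, ?_⟩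
  · rintro x y α β T ⟨⟨hadd, hsmul⟩, -⟩
    rw [hadd, hsmul, hsmul]
  · intro x
    set S := {r : ℝ | ∃ T : X → ℝ, IsBddBLinear N b T ∧ bnorm N b T ≤ 1 ∧ r = |T x|} with hS
    have hub : ∀ r ∈ S, r ≤ bsem N b x := by
      rintro r ⟨T, hT, hn, rfl⟩
      calc |T x| ≤ bnorm N b T * bsem N b x := abs_le_bnorm_mul N b T hT x
        _ ≤ 1 * bsem N b x := mul_le_mul_of_nonneg_right hn (bsem_nonneg' N b x)
        _ = bsem N b x := one_mul _
    have hmem : bsem N b x ∈ S := by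
      rcases eq_or_ne (bsem N b x) 0 with hp | hp
      · refine ⟨0, ⟨⟨fun _ _ => by simp, fun _ _ => by simp⟩, 1, one_pos,
          fun z => by simpa using bsem_nonneg' N b z⟩, ?_, by simp [hp]⟩
        apply csInf_le ⟨0, fun M hM => le_of_lt hM.1⟩
        exact ⟨one_pos, fun z => by simpa using bsem_nonneg' N b z⟩
      · obtain ⟨T, hT, hn, hTx⟩ := exists_bdd_blinear N b x hp
        exact ⟨T, hT, hn, by rw [hTx, abs_of_nonneg (bsem_nonneg' N b x)]⟩
    exact le_antisymm (csSup_le ⟨_, hmem⟩ hub) (le_csSup ⟨_, hub⟩ hmem)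
  · intro x y hxy hli hcon
    have hp : bsem N b (x - y) ≠ 0 := by
      simpa [bsem, N.eq_zero_iff] using hli
    obtain ⟨T, hT, -, hTx⟩ := exists_bdd_blinear N b (x - y) hp
    have heq : T x = T y := congrFun hcon ⟨T, hT⟩
    obtain ⟨⟨hadd, hsmul⟩, -⟩ := hT
    have : T (x - y) = T x - T y := by
      have h1 : T (x + (-1 : ℝ) • y) = T x + (-1) * T y := by rw [hadd, hsmul]
      simpa [sub_eq_add_neg] using h1
    rw [this, heq, sub_self] at hTx
    exact hp hTx.symm
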